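/- Let R be a commutative ring, A a square matrix of order n over R, and A_r = [A | A_{n+1} | ... | A_{n+r}] an n×(n+r) matrix whose extra columns satisfy A_{n+j} = Σ_{i=1}^{n+j-1} p_{i,j} A_i for j = 1,...,r. Let P be the (n+r-1)×r matrix whose (i,j) entry is p_{i,j} for i ≤ n+j-1, equals -1 for i = n+j, and 0 for i > n+j. For indices 1 ≤ j_1 < ... < j_r < n+r, let M be the determinant of the n×n submatrix of A_r obtained by deleting columns j_1,...,j_r, and let Q be the r×r submatrix of P consisting of rows j_1,...,j_r. Then M = (-1)^{nr + j_1+...+j_r + r(r-1)/2} · det(Q) · det(A). -/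

import Mathlib

open Equiv Finset Matrix

namespace NDetAux

/-- A strictly monotone permutation of `Fin N` is the identity. -/
lemma strictMono_perm_eq_refl {N : ℕ} (f : Equiv.Perm (Fin N)) (hf : StrictMono ⇑f) :
    f = Equiv.refl (Fin N) := by
  have hle : ∀ x : Fin N, x ≤ f x := by intro x; have i : WellFoundedLT (Fin N) := inferInstance; exact @StrictMono.le_apply (Fin N) _ i _ hf x
  have hsum : ∑ x : Fin N, ((f x : ℕ)) = ∑ x : Fin N, (x : ℕ) :=
    Equiv.sum_comp f (fun x : Fin N => (x : ℕ))
  have := (Finset.sum_eq_sum_iff_of_le (s := Finset.univ)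
      (f := fun x : Fin N => (x : ℕ)) (g := fun x : Fin N => ((f x : ℕ)))
      (fun i _ => hle i)).mp hsum.symm
  ext x
  exact (this x (Finset.mem_univ x)).symm

variable {n r : ℕ}

/-- The function underlying the permutation determined by complementary strictly
monotone maps `c`, `d`. -/
def smFun (c : Fin n → Fin (n + r)) (d : Fin r → Fin (n + r)) : Fin (n + r) → Fin (n + r) :=
  fun x => Sum.elim c d (finSumFinEquiv.symm x)

lemma smFun_bij {c : Fin n → Fin (n + r)} {d : Fin r → Fin (n + r)}
    (hc : StrictMono c) (hd : StrictMono d) (hdisj : ∀ k t, c k ≠ d t) :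
    Function.Bijective (smFun c d) := by
  rw [Fintype.bijective_iff_injective_and_card]
  refine ⟨?_, rfl⟩
  intro x y hxy
  unfold smFun at hxy
  have : finSumFinEquiv.symm x = finSumFinEquiv.symm y := by
    rcases hx : finSumFinEquiv.symm x with k | t <;> rcases hy : finSumFinEquiv.symm y with k' | t' <;>
      rw [hx, hy] at hxy <;> simp only [Sum.elim_inl, Sum.elim_inr] at hxy
    · rw [hc.injective hxy]
    · exact absurd hxy (hdisj _ _)
    · exact absurd hxy.symm (hdisj _ _)
    · rw [hd.injective hxy]
  exact finSumFinEquiv.symm.injective this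

/-- The permutation of `Fin (n+r)` sending the first `n` positions to `c` (monotonically)
and the last `r` positions to `d`. -/
noncomputable def smPerm {c : Fin n → Fin (n + r)} {d : Fin r → Fin (n + r)}
    (hc : StrictMono c) (hd : StrictMono d) (hdisj : ∀ k t, c k ≠ d t) :
    Equiv.Perm (Fin (n + r)) :=
  Equiv.ofBijective _ (smFun_bij hc hd hdisj)

@[simp] lemma smPerm_castAdd {c : Fin n → Fin (n + r)} {d : Fin r → Fin (n + r)}
    (hc : StrictMono c) (hd : StrictMono d) (hdisj : ∀ k t, c k ≠ d t) (k : Fin n) :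
    smPerm hc hd hdisj (Fin.castAdd r k) = c k := by
  simp [smPerm, smFun, Equiv.ofBijective]

@[simp] lemma smPerm_natAdd {c : Fin n → Fin (n + r)} {d : Fin r → Fin (n + r)}
    (hc : StrictMono c) (hd : StrictMono d) (hdisj : ∀ k t, c k ≠ d t) (t : Fin r) :
    smPerm hc hd hdisj (Fin.natAdd n t) = d t := by
  simp [smPerm, smFun, Equiv.ofBijective]

/-- The cycle sending `m ↦ last`, `x ↦ x - 1` for `x > m`, fixing `x < m`. -/
def cyc {N : ℕ} (m : Fin (N + 1)) : Equiv.Perm (Fin (N + 1)) :=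
  Fin.revPerm.trans ((Fin.cycleRange m.rev).trans Fin.revPerm)

lemma cyc_apply_of_lt {N : ℕ} {m x : Fin (N + 1)} (h : x < m) : cyc m x = x := by
  simp only [cyc, Equiv.trans_apply, Fin.revPerm_apply]
  rw [Fin.cycleRange_of_gt (by rwa [Fin.rev_lt_rev]), Fin.rev_rev]

lemma cyc_apply_self {N : ℕ} (m : Fin (N + 1)) : cyc m m = Fin.last N := by
  simp only [cyc, Equiv.trans_apply, Fin.revPerm_apply]
  rw [Fin.cycleRange_self, Fin.rev_zero]

lemma cyc_apply_of_gt {N : ℕ} {m x : Fin (N + 1)} (h : m < x) : (cyc m x : ℕ) = (x : ℕ) - 1 := by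
  simp only [cyc, Equiv.trans_apply, Fin.revPerm_apply]
  have h1 : x.rev < m.rev := by rwa [Fin.rev_lt_rev]
  rw [Fin.val_rev, Fin.coe_cycleRange_of_lt h1, Fin.val_rev]
  have := x.isLt
  have := m.isLt
  have hx : 0 < (x : ℕ) := lt_of_le_of_lt (Nat.zero_le _) h
  omega

lemma sign_cyc {N : ℕ} (m : Fin (N + 1)) :
    Equiv.Perm.sign (cyc m) = (-1) ^ (N - (m : ℕ)) := by
  have : cyc m = Fin.revPerm * (Fin.cycleRange m.rev * Fin.revPerm) := rfl
  rw [this, _root_.map_mul, _root_.map_mul, Fin.sign_cycleRange]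
  have hrev : (Equiv.Perm.sign (Fin.revPerm (n := N + 1))) *
      (Equiv.Perm.sign (Fin.revPerm (n := N + 1))) = 1 := by
    rw [← _root_.map_mul]
    have : Fin.revPerm * Fin.revPerm = (1 : Equiv.Perm (Fin (N + 1))) := by
      ext x
      simp [Fin.rev_rev]
    rw [this, _root_.map_one]
  have hv : (m.rev : ℕ) = N - (m : ℕ) := by
    rw [Fin.val_rev]; omega
  calc Equiv.Perm.sign Fin.revPerm * ((-1) ^ (m.rev : ℕ) * Equiv.Perm.sign Fin.revPerm)
      = (Equiv.Perm.sign Fin.revPerm * Equiv.Perm.sign Fin.revPerm) * (-1) ^ (m.rev : ℕ) := by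
        rw [mul_comm ((-1 : ℤˣ) ^ (m.rev : ℕ)), mul_assoc]
    _ = (-1) ^ (N - (m : ℕ)) := by rw [hrev, one_mul, hv]

/-- `c` shrunk after deleting the value `m` (assumed not in the range of `c`). -/
def shrinkC {n r : ℕ} (m : Fin (n + (r + 1))) (c : Fin n → Fin (n + (r + 1))) :
    Fin n → Fin (n + r) :=
  fun k => ⟨if (c k : ℕ) < (m : ℕ) then (c k : ℕ) else (c k : ℕ) - 1, by
    have h1 := (c k).isLt
    have h2 := m.isLt
    have h3 := k.pos
    split_ifs <;> omega⟩

/-- `d` with its largest value removed. -/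
def shrinkD {n r : ℕ} (d : Fin (r + 1) → Fin (n + (r + 1))) (hd : StrictMono d) :
    Fin r → Fin (n + r) :=
  fun t => ⟨(d t.castSucc : ℕ), by
    have h1 : d t.castSucc < d (Fin.last r) := hd (Fin.castSucc_lt_last t)
    have h2 := (d (Fin.last r)).isLt
    have h3 : (d t.castSucc : ℕ) < (d (Fin.last r) : ℕ) := h1
    omega⟩

lemma sign_smPerm {r n : ℕ} {c : Fin n → Fin (n + r)} {d : Fin r → Fin (n + r)}
    (hc : StrictMono c) (hd : StrictMono d) (hdisj : ∀ k t, c k ≠ d t) :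
    Equiv.Perm.sign (smPerm hc hd hdisj) =
      (-1) ^ (n * r + r * (r - 1) / 2 + ∑ t : Fin r, (d t : ℕ)) := by
  induction r with
  | zero =>
    have h0 : smPerm hc hd hdisj = Equiv.refl _ := by
      apply strictMono_perm_eq_refl
      have hval : ∀ x : Fin (n + 0), smPerm hc hd hdisj x = c ⟨(x : ℕ), by omega⟩ := by
        intro x
        have hxe : x = Fin.castAdd 0 ⟨(x : ℕ), by omega⟩ := by apply Fin.ext; rfl
        conv_lhs => rw [hxe]
        rw [smPerm_castAdd]
      intro a b hab
      rw [hval a, hval b]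
      exact hc (by exact hab)
    rw [h0]
    simp
  | succ r ih =>
    set m : Fin (n + (r + 1)) := d (Fin.last r) with hm
    have hmlt : ∀ t : Fin r, d t.castSucc < m := fun t => hd (Fin.castSucc_lt_last t)
    have hcne : ∀ k, c k ≠ m := fun k => hdisj k _
    have hc' : StrictMono (shrinkC m c) := by
      intro a b hab
      have h1 : (c a : ℕ) < (c b : ℕ) := hc hab
      have h2 : (c a : ℕ) ≠ (m : ℕ) := fun h => hcne a (Fin.ext h)
      have h3 : (c b : ℕ) ≠ (m : ℕ) := fun h => hcne b (Fin.ext h)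
      show (_ : ℕ) < _
      simp only [shrinkC]
      split_ifs <;> omega
    have hd' : StrictMono (shrinkD d hd) := by
      intro a b hab
      show (_ : ℕ) < _
      simp only [shrinkD]
      exact hd (Fin.castSucc_lt_castSucc_iff.mpr hab)
    have hdisj' : ∀ k t, shrinkC m c k ≠ shrinkD d hd t := by
      intro k t h
      have hv := congrArg Fin.val h
      simp only [shrinkC, shrinkD] at hv
      have h2 : (c k : ℕ) ≠ (d t.castSucc : ℕ) := fun h => hdisj k t.castSucc (Fin.ext h)
      have h3 : (d t.castSucc : ℕ) < (m : ℕ) := hmlt t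
      have h4 : (c k : ℕ) ≠ (m : ℕ) := fun h => hcne k (Fin.ext h)
      split_ifs at hv <;> omega
    have key : (smPerm hc hd hdisj).trans (cyc m) =
        finSuccEquivLast.symm.permCongr (Equiv.optionCongr (smPerm hc' hd' hdisj')) := by
      apply Equiv.ext
      intro x
      rw [Equiv.trans_apply]
      rcases hx : finSumFinEquiv.symm x with k | t
      · have hxe : x = Fin.castAdd (r + 1) k := by
          have h5 := congrArg finSumFinEquiv hx
          rwa [Equiv.apply_symm_apply, finSumFinEquiv_apply_left] at h5
        rw [hxe, smPerm_castAdd]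
        have hR : (finSuccEquivLast.symm.permCongr (Equiv.optionCongr (smPerm hc' hd' hdisj')))
            (Fin.castSucc (Fin.castAdd r k)) = Fin.castSucc (shrinkC m c k) := by
          simp
        refine Eq.trans ?_ hR.symm
        rcases lt_or_gt_of_ne (hcne k) with h | h
        · have h1 : ((Fin.castSucc (shrinkC m c k)) : ℕ) = (c k : ℕ) := by
            show (if (c k : ℕ) < (m : ℕ) then (c k : ℕ) else (c k : ℕ) - 1) = (c k : ℕ)
            rw [if_pos (show (c k : ℕ) < (m : ℕ) from h)]
          apply Fin.ext
          exact (congrArg Fin.val (cyc_apply_of_lt h)).trans h1.symm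
        · have h1 : ((Fin.castSucc (shrinkC m c k)) : ℕ) = (c k : ℕ) - 1 := by
            show (if (c k : ℕ) < (m : ℕ) then (c k : ℕ) else (c k : ℕ) - 1) = (c k : ℕ) - 1
            rw [if_neg (by have hv : (m : ℕ) < (c k : ℕ) := h; omega)]
          apply Fin.ext
          exact (cyc_apply_of_gt h).trans h1.symm
      · have hxe : x = Fin.natAdd n t := by
          have h5 := congrArg finSumFinEquiv hx
          rwa [Equiv.apply_symm_apply, finSumFinEquiv_apply_right] at h5
        rw [hxe, smPerm_natAdd]
        induction t using Fin.lastCases with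
        | last =>
          rw [← hm]
          have hR : (finSuccEquivLast.symm.permCongr (Equiv.optionCongr (smPerm hc' hd' hdisj')))
              (Fin.last (n + r)) = Fin.last (n + r) := by
            simp
          exact (cyc_apply_self m).trans hR.symm
        | cast t' =>
          have hR : (finSuccEquivLast.symm.permCongr (Equiv.optionCongr (smPerm hc' hd' hdisj')))
              (Fin.castSucc (Fin.natAdd n t')) = Fin.castSucc (shrinkD d hd t') := by
            simp
            rw [show (Fin.natAdd n t'.castSucc : Fin (n + (r + 1))) =
              ((Fin.natAdd n t').castSucc : Fin (n + r + 1)) from Fin.ext rfl]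
            rw [finSuccEquivLast_castSucc, Option.map_some, finSuccEquivLast_symm_some, smPerm_natAdd]
          refine Eq.trans ?_ hR.symm
          exact (cyc_apply_of_lt (hmlt t')).trans (Fin.ext rfl)
    have hsgn : Equiv.Perm.sign (cyc m) * Equiv.Perm.sign (smPerm hc hd hdisj)
        = Equiv.Perm.sign (smPerm hc' hd' hdisj') := by
      have hsplit : Equiv.Perm.sign ((smPerm hc hd hdisj).trans (cyc m)) =
          Equiv.Perm.sign (cyc m) * Equiv.Perm.sign (smPerm hc hd hdisj) :=
        by exact Equiv.Perm.sign_mul _ _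
      rw [← hsplit, key]
      exact (Equiv.Perm.sign_permCongr finSuccEquivLast.symm
        (Equiv.optionCongr (smPerm hc' hd' hdisj'))).trans (Equiv.optionCongr_sign _)
    rw [ih hc' hd' hdisj', sign_cyc] at hsgn
    simp only [Nat.add_eq] at hsgn
    -- solve for the sign
    have hsolve : Equiv.Perm.sign (smPerm hc hd hdisj) =
        (-1) ^ ((n + r - (m : ℕ)) + (n * r + r * (r - 1) / 2 + ∑ t : Fin r, ((shrinkD d hd t : ℕ)))) := by
      rw [pow_add, ← hsgn, ← mul_assoc, ← pow_add,
        Even.neg_one_pow ⟨n + r - (m : ℕ), rfl⟩, one_mul]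
    rw [hsolve]
    -- exponent arithmetic
    have hsum : ∑ t : Fin (r + 1), (d t : ℕ) =
        (∑ t : Fin r, ((shrinkD d hd t : ℕ))) + (m : ℕ) := by
      rw [Fin.sum_univ_castSucc]
      rfl
    rw [hsum]
    have hprod : (r + 1) * ((r + 1) - 1) = r * (r - 1) + 2 * r := by
      cases r with
      | zero => rfl
      | succ s => simp only [Nat.add_sub_cancel]; ring
    have heven : r * (r - 1) % 2 = 0 := by
      cases r with
      | zero => rfl
      | succ s =>
        have := Nat.even_mul_succ_self s
        have h7 : (s + 1) * (s + 1 - 1) = s * (s + 1) := by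
          simp only [Nat.add_sub_cancel]; ring
        rw [h7, Nat.even_iff] at *
        exact this
    have hd2 : (r + 1) * ((r + 1) - 1) / 2 = r * (r - 1) / 2 + r := by
      generalize hX : (r + 1) * ((r + 1) - 1) = X at hprod
      generalize hY : r * (r - 1) = Y at hprod heven
      omega
    have hmul : n * (r + 1) = n * r + n := by ring
    have hmle : (m : ℕ) ≤ n + r := by have := m.isLt; omega
    have hE : n * (r + 1) + (r + 1) * ((r + 1) - 1) / 2 +
        ((∑ t : Fin r, ((shrinkD d hd t : ℕ))) + (m : ℕ)) =
        ((n + r - (m : ℕ)) + (n * r + r * (r - 1) / 2 +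
          ∑ t : Fin r, ((shrinkD d hd t : ℕ)))) + 2 * (m : ℕ) := by
      rw [hmul, hd2]
      generalize n * r = a
      generalize r * (r - 1) / 2 = b
      generalize (∑ t : Fin r, ((shrinkD d hd t : ℕ))) = sS
      omega
    rw [hE]
    conv_rhs => rw [pow_add, pow_mul]
    norm_num

end NDetAux


/-- Theorem 1 of the paper: an `n`-determinant connects `det A` with an arbitrary
minor of order `n` of the extended matrix `A_r = [A | A_{n+1} | ... | A_{n+r}]`. -/
theorem n_determinant_minor_formula {R : Type*} [CommRing R] {n r : ℕ}
    (A : Matrix (Fin n) (Fin n) R) (Ar : Matrix (Fin n) (Fin (n + r)) R)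
    (p : ℕ → ℕ → R)
    -- the first n columns of Ar form A
    (hA : ∀ (i j : Fin n), Ar i (Fin.castLE (Nat.le_add_right n r) j) = A i j)
    -- column n+j of Ar is the prescribed linear combination of the previous columns
    (hcol : ∀ (j : Fin r) (i : Fin n),
      Ar i ⟨n + (j : ℕ), Nat.add_lt_add_left j.isLt n⟩ =
        ∑ m : Fin (n + (j : ℕ)), p (m : ℕ) (j : ℕ) *
          Ar i (Fin.castLE (Nat.add_le_add_left j.isLt.le n) m))
    -- c enumerates the kept columns, d the deleted columns j_1 < ... < j_r
    (c : Fin n → Fin (n + r)) (d : Fin r → Fin (n + r))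
    (hc : StrictMono c) (hd : StrictMono d)
    (hdisj : ∀ (k : Fin n) (t : Fin r), c k ≠ d t)
    -- the last column cannot be deleted
    (hlast : ∀ t : Fin r, (d t : ℕ) < n + r - 1) :
    Matrix.det (Matrix.of fun i k => Ar i (c k)) =
      (-1 : R) ^ (n * r + (∑ t : Fin r, ((d t : ℕ) + 1)) + r * (r - 1) / 2) *
        Matrix.det (Matrix.of fun s t : Fin r =>
          if (d s : ℕ) < n + (t : ℕ) then p (d s : ℕ) (t : ℕ)
          else if (d s : ℕ) = n + (t : ℕ) then -1 else 0) *
        A.det := by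

  classical
  set QM : Matrix (Fin r) (Fin r) R := Matrix.of fun s t : Fin r =>
      if (d s : ℕ) < n + (t : ℕ) then p (d s : ℕ) (t : ℕ)
      else if (d s : ℕ) = n + (t : ℕ) then -1 else 0 with hQM
  set B : Matrix (Fin n ⊕ Fin r) (Fin (n + r)) R :=
    Matrix.of (Sum.elim (fun i k => Ar i k) (fun t k => if k = d t then 1 else 0)) with hB
  set U : Matrix (Fin (n + r)) (Fin n ⊕ Fin r) R :=
    Matrix.of (fun k => Sum.elim
      (fun mm : Fin n => if (k : ℕ) = (mm : ℕ) then 1 else 0)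
      (fun j : Fin r => if (k : ℕ) < n + (j : ℕ) then p (k : ℕ) (j : ℕ)
        else if (k : ℕ) = n + (j : ℕ) then -1 else 0)) with hU
  set T : Matrix (Fin n) (Fin r) R := Matrix.of fun k j => p (k : ℕ) (j : ℕ) with hT
  set L : Matrix (Fin r) (Fin r) R := Matrix.of fun t j =>
    if (t : ℕ) < (j : ℕ) then p (n + (t : ℕ)) (j : ℕ)
    else if (t : ℕ) = (j : ℕ) then -1 else 0 with hL
  set X : Matrix (Fin r) (Fin n) R :=
    Matrix.of fun t mm => if ((d t : ℕ)) = (mm : ℕ) then (1 : R) else 0 with hX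
  set τ : (Fin n ⊕ Fin r) ≃ Fin (n + r) :=
    finSumFinEquiv.trans (NDetAux.smPerm hc hd hdisj) with hτ
  set σ : Equiv.Perm (Fin n ⊕ Fin r) := τ.trans finSumFinEquiv.symm with hσ
  have hτl : ∀ k : Fin n, τ (Sum.inl k) = c k := by
    intro k
    rw [hτ]
    rw [Equiv.trans_apply, finSumFinEquiv_apply_left, NDetAux.smPerm_castAdd]
  have hτr : ∀ t : Fin r, τ (Sum.inr t) = d t := by
    intro t
    rw [hτ]
    rw [Equiv.trans_apply, finSumFinEquiv_apply_right, NDetAux.smPerm_natAdd]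
  -- Step A : the column-selected B is block triangular
  have hBsub : B.submatrix id ⇑τ = Matrix.fromBlocks
      (Matrix.of fun i k => Ar i (c k)) (Matrix.of fun i t => Ar i (d t)) 0 1 := by
    ext x y
    cases x with
    | inl i =>
      cases y with
      | inl k =>
        rw [Matrix.submatrix_apply, id_eq, hτl, Matrix.fromBlocks_apply₁₁, hB]
        rfl
      | inr t =>
        rw [Matrix.submatrix_apply, id_eq, hτr, Matrix.fromBlocks_apply₁₂, hB]
        rfl
    | inr t =>
      cases y with
      | inl k =>
        rw [Matrix.submatrix_apply, id_eq, hτl, Matrix.fromBlocks_apply₂₁, hB]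
        simp only [Matrix.of_apply, Sum.elim_inr, Matrix.zero_apply]
        rw [if_neg (hdisj k t)]
      | inr t' =>
        rw [Matrix.submatrix_apply, id_eq, hτr, Matrix.fromBlocks_apply₂₂, hB]
        simp only [Matrix.of_apply, Sum.elim_inr, Matrix.one_apply]
        by_cases h : t = t'
        · subst h
          rw [if_pos rfl, if_pos rfl]
        · rw [if_neg (fun he => h (hd.injective he).symm), if_neg h]
  have hdetB : (B.submatrix id ⇑τ).det = Matrix.det (Matrix.of fun i k => Ar i (c k)) := by
    rw [hBsub, Matrix.det_fromBlocks_zero₂₁, Matrix.det_one, mul_one]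
  -- Step C : U with rows permuted back is block triangular
  have hUblock : ∀ (k : Fin (n + r)) (y : Fin n ⊕ Fin r),
      U k y = (Matrix.fromBlocks 1 T 0 L) (finSumFinEquiv.symm k) y := by
    intro k y
    rcases hz : finSumFinEquiv.symm k with kk | tt
    · have hk : k = Fin.castAdd r kk := by
        have h5 := congrArg finSumFinEquiv hz
        rwa [Equiv.apply_symm_apply, finSumFinEquiv_apply_left] at h5
      rw [hk]
      cases y with
      | inl mm =>
        rw [hU]
        simp only [Matrix.of_apply, Sum.elim_inl, Matrix.fromBlocks_apply₁₁,
          Matrix.one_apply, Fin.coe_castAdd]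
        by_cases h : kk = mm
        · subst h; rw [if_pos rfl, if_pos rfl]
        · rw [if_neg (fun he => h (Fin.ext he)), if_neg h]
      | inr j =>
        rw [hU]
        simp only [Matrix.of_apply, Sum.elim_inr, Matrix.fromBlocks_apply₁₂, hT,
          Fin.coe_castAdd]
        rw [if_pos (by have := kk.isLt; omega)]
    · have hk : k = Fin.natAdd n tt := by
        have h5 := congrArg finSumFinEquiv hz
        rwa [Equiv.apply_symm_apply, finSumFinEquiv_apply_right] at h5
      rw [hk]
      cases y with
      | inl mm =>
        rw [hU]
        simp only [Matrix.of_apply, Sum.elim_inl, Matrix.fromBlocks_apply₂₁,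
          Matrix.zero_apply, Fin.coe_natAdd]
        rw [if_neg (by have := mm.isLt; omega)]
      | inr j =>
        rw [hU]
        simp only [Matrix.of_apply, Sum.elim_inr, Matrix.fromBlocks_apply₂₂, hL,
          Fin.coe_natAdd]
        by_cases h1 : (tt : ℕ) < (j : ℕ)
        · rw [if_pos h1, if_pos (show n + (tt : ℕ) < n + (j : ℕ) by omega)]
        · rw [if_neg h1, if_neg (show ¬(n + (tt : ℕ) < n + (j : ℕ)) by omega)]
          by_cases h2 : (tt : ℕ) = (j : ℕ)
          · rw [if_pos h2, if_pos (show n + (tt : ℕ) = n + (j : ℕ) by omega)]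
          · rw [if_neg h2, if_neg (show ¬(n + (tt : ℕ) = n + (j : ℕ)) by omega)]
  have hUsub : U.submatrix ⇑τ id = (Matrix.fromBlocks 1 T 0 L).submatrix ⇑σ id := by
    ext x y
    simp only [Matrix.submatrix_apply, id_eq]
    exact hUblock (τ x) y
  -- Step D : determinant of the permuted U
  have hsignσ : Equiv.Perm.sign σ =
      (-1 : ℤˣ) ^ (n * r + r * (r - 1) / 2 + ∑ t : Fin r, ((d t : ℕ))) := by
    have h1 : σ = Equiv.permCongr finSumFinEquiv.symm (NDetAux.smPerm hc hd hdisj) :=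
      Equiv.ext fun x => rfl
    rw [h1, Equiv.Perm.sign_permCongr, NDetAux.sign_smPerm]
  have hdetL : L.det = (-1 : R) ^ r := by
    have htri : L.BlockTriangular id := by
      intro i j hij
      have hij' : (j : ℕ) < (i : ℕ) := hij
      rw [hL]
      simp only [Matrix.of_apply]
      rw [if_neg (by omega), if_neg (by omega)]
    rw [Matrix.det_of_upperTriangular htri]
    have hdiag : ∀ i : Fin r, L i i = -1 := by
      intro i
      rw [hL]
      simp only [Matrix.of_apply]
      rw [if_neg (by omega)]
      simp
    rw [Finset.prod_congr rfl (fun i _ => hdiag i)]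
    simp [Finset.prod_const]
  have hdetU : (U.submatrix ⇑τ id).det =
      ((-1 : R) ^ (n * r + r * (r - 1) / 2 + ∑ t : Fin r, ((d t : ℕ)))) * (-1 : R) ^ r := by
    rw [hUsub, Matrix.det_permute, Matrix.det_fromBlocks_zero₂₁, Matrix.det_one, one_mul,
      hdetL, hsignσ]
    norm_num
  -- Step E : the product B * U
  have hBU : B * U = Matrix.fromBlocks A 0 X QM := by
    ext x y
    cases x with
    | inl i =>
      cases y with
      | inl mm =>
        rw [Matrix.mul_apply, Matrix.fromBlocks_apply₁₁]
        rw [Finset.sum_eq_single (Fin.castLE (Nat.le_add_right n r) mm)]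
        · rw [hB, hU]
          simp only [Matrix.of_apply, Sum.elim_inl]
          rw [if_pos (show ((Fin.castLE (Nat.le_add_right n r) mm : Fin (n + r)) : ℕ) = (mm : ℕ)
            from rfl), mul_one, hA]
        · intro b _ hb
          rw [hB, hU]
          simp only [Matrix.of_apply, Sum.elim_inl]
          rw [if_neg (show ¬(((b : Fin (n + r)) : ℕ) = (mm : ℕ)) from fun he => hb (Fin.ext he)),
            mul_zero]
        · intro hmem
          exact absurd (Finset.mem_univ _) hmem
      | inr j =>
        rw [Matrix.mul_apply, Matrix.fromBlocks_apply₁₂, Matrix.zero_apply]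
        have hterm : ∀ k : Fin (n + r), B (Sum.inl i) k * U k (Sum.inr j)
            = (if (k : ℕ) < n + (j : ℕ) then p (k : ℕ) (j : ℕ) * Ar i k else 0)
              + (if k = (⟨n + (j : ℕ), Nat.add_lt_add_left j.isLt n⟩ : Fin (n + r))
                  then -Ar i k else 0) := by
          intro k
          rw [hB, hU]
          simp only [Matrix.of_apply, Sum.elim_inl, Sum.elim_inr]
          by_cases h1 : (k : ℕ) < n + (j : ℕ)
          · rw [if_pos h1, if_pos h1,
              if_neg (fun he => by
                have := congrArg Fin.val he
                simp only at this
                omega),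
              add_zero, mul_comm]
          · rw [if_neg h1, if_neg h1]
            by_cases h2 : (k : ℕ) = n + (j : ℕ)
            · rw [if_pos h2, if_pos (Fin.ext h2), zero_add, mul_neg_one]
            · rw [if_neg h2, if_neg (fun he => h2 (congrArg Fin.val he)), mul_zero, add_zero]
        rw [Finset.sum_congr rfl (fun k _ => hterm k), Finset.sum_add_distrib,
          Fintype.sum_ite_eq' (⟨n + (j : ℕ), Nat.add_lt_add_left j.isLt n⟩ : Fin (n + r))
            (fun k => -Ar i k)]
        have hsum1 : ∑ k : Fin (n + r),
            (if (k : ℕ) < n + (j : ℕ) then p (k : ℕ) (j : ℕ) * Ar i k else 0)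
            = ∑ mm : Fin (n + (j : ℕ)), p (mm : ℕ) (j : ℕ) *
                Ar i (Fin.castLE (Nat.add_le_add_left j.isLt.le n) mm) := by
          rw [← Finset.sum_subset (Finset.subset_univ
            (Finset.univ.map (Fin.castLEOrderEmb (Nat.add_le_add_left j.isLt.le n)).toEmbedding))]
          · rw [Finset.sum_map]
            apply Finset.sum_congr rfl
            intro mm _
            simp only [Fin.castLEOrderEmb_toEmbedding, Function.Embedding.coeFn_mk,
              Fin.coe_castLE]
            exact if_pos mm.isLt
          · intro k _ hk
            rw [if_neg]
            intro hlt
            exact hk (Finset.mem_map.mpr ⟨⟨(k : ℕ), hlt⟩, Finset.mem_univ _, Fin.ext rfl⟩)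
        rw [hsum1, ← hcol j i]
        exact add_neg_cancel _
    | inr t =>
      have hrow : ∀ y : Fin n ⊕ Fin r, (B * U) (Sum.inr t) y = U (d t) y := by
        intro y
        rw [Matrix.mul_apply]
        have hterm : ∀ k : Fin (n + r), B (Sum.inr t) k * U k y
            = if k = d t then U k y else 0 := by
          intro k
          rw [hB]
          simp only [Matrix.of_apply, Sum.elim_inr]
          rw [ite_mul, one_mul, zero_mul]
        rw [Finset.sum_congr rfl (fun k _ => hterm k),
          Fintype.sum_ite_eq' (d t) (fun k => U k y)]
      cases y with
      | inl mm =>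
        rw [hrow, Matrix.fromBlocks_apply₂₁, hU, hX]
        rfl
      | inr j =>
        rw [hrow, Matrix.fromBlocks_apply₂₂, hU, hQM]
        rfl
  -- Step F : chain of determinant identities
  have hmain : Matrix.det (Matrix.of fun i k => Ar i (c k)) *
      (((-1 : R) ^ (n * r + r * (r - 1) / 2 + ∑ t : Fin r, ((d t : ℕ)))) * (-1 : R) ^ r)
      = A.det * QM.det := by
    calc Matrix.det (Matrix.of fun i k => Ar i (c k)) *
        (((-1 : R) ^ (n * r + r * (r - 1) / 2 + ∑ t : Fin r, ((d t : ℕ)))) * (-1 : R) ^ r)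
        = (B.submatrix id ⇑τ).det * (U.submatrix ⇑τ id).det := by rw [hdetB, hdetU]
      _ = ((B.submatrix id ⇑τ) * (U.submatrix ⇑τ id)).det := (Matrix.det_mul _ _).symm
      _ = (B * U).det := by rw [Matrix.submatrix_mul_equiv, Matrix.submatrix_id_id]
      _ = (Matrix.fromBlocks A 0 X QM).det := by rw [hBU]
      _ = A.det * QM.det := Matrix.det_fromBlocks_zero₁₂ _ _ _
  have hE2 : (∑ t : Fin r, ((d t : ℕ) + 1)) = (∑ t : Fin r, ((d t : ℕ))) + r := by
    rw [Finset.sum_add_distrib]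
    simp
  rw [hE2]
  have hexp : n * r + ((∑ t : Fin r, ((d t : ℕ))) + r) + r * (r - 1) / 2
      = (n * r + r * (r - 1) / 2 + ∑ t : Fin r, ((d t : ℕ))) + r := by
    generalize n * r = a
    generalize r * (r - 1) / 2 = b
    generalize (∑ t : Fin r, ((d t : ℕ))) = sS
    omega
  rw [hexp]
  have h2 : ((-1 : R) ^ ((n * r + r * (r - 1) / 2 + ∑ t : Fin r, ((d t : ℕ))) + r)) *
      ((-1 : R) ^ ((n * r + r * (r - 1) / 2 + ∑ t : Fin r, ((d t : ℕ))) + r)) = 1 := by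
    rw [← pow_add]
    exact Even.neg_one_pow ⟨(n * r + r * (r - 1) / 2 + ∑ t : Fin r, ((d t : ℕ))) + r, rfl⟩
  calc Matrix.det (Matrix.of fun i k => Ar i (c k))
      = Matrix.det (Matrix.of fun i k => Ar i (c k)) *
        (((-1 : R) ^ ((n * r + r * (r - 1) / 2 + ∑ t : Fin r, ((d t : ℕ))) + r)) *
         ((-1 : R) ^ ((n * r + r * (r - 1) / 2 + ∑ t : Fin r, ((d t : ℕ))) + r))) := by
        rw [h2, mul_one]
    _ = (Matrix.det (Matrix.of fun i k => Ar i (c k)) *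
        (((-1 : R) ^ (n * r + r * (r - 1) / 2 + ∑ t : Fin r, ((d t : ℕ)))) * (-1 : R) ^ r)) *
        ((-1 : R) ^ ((n * r + r * (r - 1) / 2 + ∑ t : Fin r, ((d t : ℕ))) + r)) := by
        rw [pow_add]
        ring
    _ = (A.det * QM.det) *
        ((-1 : R) ^ ((n * r + r * (r - 1) / 2 + ∑ t : Fin r, ((d t : ℕ))) + r)) := by
        rw [hmain]
    _ = (-1 : R) ^ ((n * r + r * (r - 1) / 2 + ∑ t : Fin r, ((d t : ℕ))) + r) * QM.det * A.det := by
        ring
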